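/- For all natural numbers k and n and every real number x, the k-th derivative of the function t ↦ (sin t)^n, evaluated at x, equals ((-1)^n / 2^n) · Σ_{r=0}^{n} (-1)^r · C(n,r) · (2r − n)^k · cos((k − n)·π/2 + (2r − n)·x), where C(n,r) is the binomial coefficient. -/

import Mathlib

open Real Finset

noncomputable def sinPowExpSum (n : ℕ) (z : ℂ) : ℂ :=
  ∑ r ∈ Finset.range (n + 1),
    (-1 : ℂ) ^ r * (n.choose r : ℂ) * Complex.exp ((2 * r - n) * z * Complex.I)

lemma sinPow_sum_reflect (f : ℕ → ℂ) (n : ℕ) :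
    ∑ j ∈ Finset.range (n + 1), f (n - j) = ∑ j ∈ Finset.range (n + 1), f j := by
  simpa using Finset.sum_range_reflect f (n + 1)

lemma sinPow_aux1 (n : ℕ) (z : ℂ) : Complex.sin z ^ n = Complex.I ^ n / 2 ^ n * sinPowExpSum n z := by
  have hsin : Complex.sin z =
      (Complex.exp (-z * Complex.I) - Complex.exp (z * Complex.I)) * Complex.I / 2 := rfl
  have hS : sinPowExpSum n z = ∑ j ∈ Finset.range (n + 1),
      (-1 : ℂ) ^ (j + n) * Complex.exp (-z * Complex.I) ^ j *
        Complex.exp (z * Complex.I) ^ (n - j) * (n.choose j : ℂ) := by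
    rw [sinPowExpSum, ← sinPow_sum_reflect (fun r => (-1 : ℂ) ^ r * (n.choose r : ℂ) *
      Complex.exp ((2 * r - n) * z * Complex.I)) n]
    refine Finset.sum_congr rfl fun j hj => ?_
    have hj' : j ≤ n := by simpa [Nat.lt_succ_iff] using hj
    have hc : ((n - j : ℕ) : ℂ) = (n : ℂ) - j := by
      push_cast [Nat.cast_sub hj']; ring
    rw [Nat.choose_symm hj']
    rw [show (-1 : ℂ) ^ (j + n) = (-1) ^ (n - j) by
      rw [show j + n = (n - j) + 2 * j by omega, pow_add, pow_mul]; simp]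
    rw [← Complex.exp_nat_mul, ← Complex.exp_nat_mul]
    have he : Complex.exp ((2 * ((n - j : ℕ) : ℂ) - n) * z * Complex.I) =
        Complex.exp ((j : ℂ) * (-z * Complex.I)) * Complex.exp (((n - j : ℕ) : ℂ) * (z * Complex.I)) := by
      rw [← Complex.exp_add]; congr 1; rw [hc]; ring
    rw [he]; ring
  rw [hsin, div_pow, mul_pow, sub_pow, hS]
  ring

lemma sinPow_aux2 (n : ℕ) (z : ℂ) :
    ∑ r ∈ Finset.range (n + 1), (-1 : ℂ) ^ r * (n.choose r : ℂ) *
        Complex.cos ((0 - (n : ℂ)) * ((Real.pi : ℂ) / 2) + (2 * r - n) * z) =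
      (-1) ^ n * Complex.I ^ n * sinPowExpSum n z := by
  have hmI : Complex.exp (-((Real.pi : ℂ) / 2) * Complex.I) = -Complex.I := by
    rw [show -((Real.pi : ℂ)/2) * Complex.I = (-(Real.pi/2) : ℝ) * Complex.I by push_cast; ring,
      Complex.exp_mul_I]
    simp [← Complex.ofReal_cos, ← Complex.ofReal_sin]
  have hpI : Complex.exp (((Real.pi : ℂ) / 2) * Complex.I) = Complex.I := by
    rw [show ((Real.pi : ℂ)/2) * Complex.I = ((Real.pi/2) : ℝ) * Complex.I by push_cast; ring,
      Complex.exp_mul_I]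
    simp [← Complex.ofReal_cos, ← Complex.ofReal_sin]
  have hcos : ∀ θ : ℂ, Complex.cos θ =
      (Complex.exp (θ * Complex.I) + Complex.exp (-θ * Complex.I)) / 2 := fun θ => rfl
  have key : ∀ r : ℕ,
      Complex.cos ((0 - (n : ℂ)) * ((Real.pi : ℂ) / 2) + (2 * r - n) * z) =
        ((-Complex.I) ^ n * Complex.exp ((2 * r - n) * z * Complex.I)
          + Complex.I ^ n * Complex.exp (-((2 * r - n) * z * Complex.I))) / 2 := by
    intro r
    rw [hcos]
    congr 2
    · rw [show ((0 - (n : ℂ)) * ((Real.pi : ℂ) / 2) + (2 * r - n) * z) * Complex.I =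
        (n : ℂ) * (-((Real.pi : ℂ)/2) * Complex.I) + (2 * r - n) * z * Complex.I by ring,
        Complex.exp_add, Complex.exp_nat_mul, hmI]
    · rw [show -((0 - (n : ℂ)) * ((Real.pi : ℂ) / 2) + (2 * r - n) * z) * Complex.I =
        (n : ℂ) * (((Real.pi : ℂ)/2) * Complex.I) + -((2 * r - n) * z * Complex.I) by ring,
        Complex.exp_add, Complex.exp_nat_mul, hpI]
  calc ∑ r ∈ Finset.range (n + 1), (-1 : ℂ) ^ r * (n.choose r : ℂ) *
        Complex.cos ((0 - (n : ℂ)) * ((Real.pi : ℂ) / 2) + (2 * r - n) * z)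
      = ((-Complex.I) ^ n / 2) * sinPowExpSum n z + (Complex.I ^ n / 2) *
          ∑ r ∈ Finset.range (n + 1), (-1 : ℂ) ^ r * (n.choose r : ℂ) *
            Complex.exp (-((2 * r - n) * z * Complex.I)) := by
        rw [sinPowExpSum, Finset.mul_sum, Finset.mul_sum, ← Finset.sum_add_distrib]
        refine Finset.sum_congr rfl fun r _ => ?_
        rw [key r]; ring
    _ = (-1) ^ n * Complex.I ^ n * sinPowExpSum n z := by
        have hrefl : ∑ r ∈ Finset.range (n + 1), (-1 : ℂ) ^ r * (n.choose r : ℂ) *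
            Complex.exp (-((2 * r - n) * z * Complex.I)) = (-1) ^ n * sinPowExpSum n z := by
          rw [sinPowExpSum, Finset.mul_sum, ← sinPow_sum_reflect (fun r => (-1 : ℂ) ^ n * ((-1 : ℂ) ^ r * (n.choose r : ℂ) *
            Complex.exp ((2 * r - n) * z * Complex.I))) n]
          refine Finset.sum_congr rfl fun j hj => ?_
          have hj' : j ≤ n := by simpa [Nat.lt_succ_iff] using hj
          have hc : ((n - j : ℕ) : ℂ) = (n : ℂ) - j := by
            push_cast [Nat.cast_sub hj']; ring
          rw [Nat.choose_symm hj', hc]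
          rw [show (-1 : ℂ) ^ n * ((-1) ^ (n - j) * (n.choose j : ℂ) *
              Complex.exp ((2 * ((n : ℂ) - j) - n) * z * Complex.I)) =
            ((-1 : ℂ) ^ n * (-1) ^ (n - j)) * (n.choose j : ℂ) *
              Complex.exp ((2 * ((n : ℂ) - j) - n) * z * Complex.I) by ring]
          rw [show (-1 : ℂ) ^ n * (-1) ^ (n - j) = (-1) ^ j by
            rw [← pow_add, show n + (n - j) = j + 2 * (n - j) by omega, pow_add, pow_mul]; simp]
          congr 2
          ring
        rw [hrefl, neg_pow]
        ring

lemma sinPow_base (n : ℕ) (x : ℝ) :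
    Real.sin x ^ n = ((-1 : ℝ) ^ n / 2 ^ n) * ∑ r ∈ Finset.range (n + 1),
      (-1 : ℝ) ^ r * (n.choose r : ℝ) *
        Real.cos ((0 - (n : ℝ)) * (Real.pi / 2) + (2 * r - n) * x) := by
  have hone : ((-1 : ℂ)) ^ n * (-1) ^ n = 1 := by rw [← mul_pow]; simp
  have hC : (Complex.sin x) ^ n = ((-1 : ℂ) ^ n / 2 ^ n) * ∑ r ∈ Finset.range (n + 1),
      (-1 : ℂ) ^ r * (n.choose r : ℂ) *
        Complex.cos ((0 - (n : ℂ)) * ((Real.pi : ℂ) / 2) + (2 * r - n) * (x : ℂ)) := by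
    rw [sinPow_aux2, sinPow_aux1]
    rw [show ((-1 : ℂ) ^ n / 2 ^ n) * ((-1) ^ n * Complex.I ^ n * sinPowExpSum n x) =
      ((-1 : ℂ) ^ n * (-1) ^ n) * (Complex.I ^ n / 2 ^ n * sinPowExpSum n x) by ring, hone, one_mul]
  apply Complex.ofReal_injective
  push_cast [Complex.ofReal_cos, Complex.ofReal_sin]
  convert hC using 2 with r hr

theorem iteratedDeriv_real_sin_pow (k n : ℕ) (x : ℝ) :
    iteratedDeriv k (fun t : ℝ => Real.sin t ^ n) x =
      ((-1 : ℝ) ^ n / 2 ^ n) *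
        ∑ r ∈ Finset.range (n + 1),
          (-1 : ℝ) ^ r * (n.choose r : ℝ) * (2 * (r : ℝ) - (n : ℝ)) ^ k *
            Real.cos (((k : ℝ) - (n : ℝ)) * (Real.pi / 2) + (2 * (r : ℝ) - (n : ℝ)) * x) := by
  induction k generalizing x with
  | zero =>
      rw [iteratedDeriv_zero, sinPow_base n x]
      congr 1
      refine Finset.sum_congr rfl fun r _ => ?_
      norm_num
  | succ k ih =>
      rw [iteratedDeriv_succ, funext ih]
      have hterm : ∀ r ∈ Finset.range (n + 1),
          HasDerivAt (fun y : ℝ => (-1 : ℝ) ^ r * (n.choose r : ℝ) * (2 * (r : ℝ) - n) ^ k *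
            Real.cos (((k : ℝ) - n) * (Real.pi / 2) + (2 * (r : ℝ) - n) * y))
          ((-1 : ℝ) ^ r * (n.choose r : ℝ) * (2 * (r : ℝ) - n) ^ k *
            (-Real.sin (((k : ℝ) - n) * (Real.pi / 2) + (2 * (r : ℝ) - n) * x) *
              (2 * (r : ℝ) - n))) x := by
        intro r _
        have h0 : HasDerivAt (fun y : ℝ => ((k : ℝ) - n) * (Real.pi / 2) + (2 * (r : ℝ) - n) * y)
            (2 * (r : ℝ) - n) x := by
          simpa using ((hasDerivAt_id x).const_mul (2 * (r : ℝ) - n)).const_add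
            (((k : ℝ) - n) * (Real.pi / 2))
        simpa using (h0.cos).const_mul ((-1 : ℝ) ^ r * (n.choose r : ℝ) * (2 * (r : ℝ) - n) ^ k)
      have hsum := (HasDerivAt.fun_sum hterm).const_mul ((-1 : ℝ) ^ n / 2 ^ n)
      rw [hsum.deriv]
      congr 1
      refine Finset.sum_congr rfl fun r _ => ?_
      rw [show (((k + 1 : ℕ) : ℝ) - n) * (Real.pi / 2) + (2 * (r : ℝ) - n) * x =
        (((k : ℝ) - n) * (Real.pi / 2) + (2 * (r : ℝ) - n) * x) + Real.pi / 2 by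
          push_cast; ring]
      rw [Real.cos_add_pi_div_two, pow_succ]
      ring
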